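/- arXiv:2403.10985 — 3 statements merged into one kernel-verified Lean document; each statement's English description precedes it below -/
import Mathlib

section
/- Let G be a finite simple graph with 1 < Θ_REV(G) < |V(G)|. Then the Shannon capacity is controlled by the reversible capacity: Θ_REV(G) ≤ Θ(G) ≤ Θ_REV(G)^{log|V(G)| / (log|V(G)| − log Θ_REV(G))}. -/
open Filter

/-- A language `L` over the vertices of `G` is distinguishable if any two distinct
equal-length words differ at some position by two non-adjacent, non-equal symbols. -/
def Distinguishable {V : Type*} (G : SimpleGraph V) (L : Set (List V)) : Prop :=
  ∀ x ∈ L, ∀ y ∈ L, x.length = y.length → x ≠ y →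
    ∃ (i : ℕ) (hx : i < x.length) (hy : i < y.length),
      x.get ⟨i, hx⟩ ≠ y.get ⟨i, hy⟩ ∧ ¬ G.Adj (x.get ⟨i, hx⟩) (y.get ⟨i, hy⟩)

/-- The growth rate of a language: `limsup |L(n)|^(1/n)`. -/
noncomputable def growthRate {V : Type*} (L : Set (List V)) : ℝ :=
  Filter.limsup (fun n : ℕ =>
    ((Set.ncard {w ∈ L | w.length = n} : ℕ) : ℝ) ^ (1 / (n : ℝ))) Filter.atTop

/-- The `n`-fold strong graph product of `G` with itself. -/
def strongPow {V : Type*} (G : SimpleGraph V) (n : ℕ) : SimpleGraph (Fin n → V) where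
  Adj x y := x ≠ y ∧ ∀ i, x i = y i ∨ G.Adj (x i) (y i)
  symm := by
    constructor
    rintro x y ⟨hne, h⟩
    exact ⟨hne.symm, fun i => (h i).imp Eq.symm (fun h' => h'.symm)⟩
  loopless := by constructor; rintro x ⟨hne, _⟩; exact hne rfl

/-- The independence number of a graph. -/
noncomputable def indepNum {V : Type*} (G : SimpleGraph V) : ℕ :=
  sSup {k | ∃ s : Set V, (s.Pairwise fun a b => ¬ G.Adj a b) ∧ s.ncard = k}

/-- The Shannon (zero-error) capacity `Θ(G) = sup_n α(G^{⊠n})^{1/n}`. -/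
noncomputable def shannonCapacity {V : Type*} (G : SimpleGraph V) : ℝ :=
  ⨆ n : ℕ, ((indepNum (strongPow G (n + 1)) : ℝ)) ^ (1 / ((n : ℝ) + 1))

/-- A reversible partial DFA: each symbol's partial transition function is injective
on its domain. -/
structure RevPartialDFA (α : Type*) where
  /-- the (finite) state space -/
  σ : Type
  /-- the state space is finite -/
  fintype : Fintype σ
  /-- partial transition function -/
  step : σ → α → Option σ
  /-- initial state -/
  start : σ
  /-- accepting states -/
  accept : Set σ
  /-- reversibility: transitions by a fixed symbol are injective where defined -/
  reversible : ∀ (a : α) (x y q : σ), step x a = some q → step y a = some q → x = y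

/-- The partial evaluation of a reversible partial DFA on a word (`none` if any
transition along the word is undefined). -/
def RevPartialDFA.eval {α : Type*} (M : RevPartialDFA α) (w : List α) : Option M.σ :=
  w.foldl (fun os a => os.bind fun s => M.step s a) (some M.start)

/-- The language accepted by a reversible partial DFA: all transitions defined and the
final state accepting. -/
def RevPartialDFA.accepts {α : Type*} (M : RevPartialDFA α) : Set (List α) :=
  {w | ∃ s ∈ M.accept, M.eval w = some s}

/-- The reversible capacity `Θ_REV(G)`: the supremum of growth rates over reversible
partial DFAs whose accepted language is distinguishable for `G`. -/
noncomputable def revCapacity {V : Type*} (G : SimpleGraph V) : ℝ :=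
  sSup {r : ℝ |
    ∃ M : RevPartialDFA V, Distinguishable G M.accepts ∧ growthRate M.accepts = r}


/-! ### Auxiliary development -/

namespace RevAux

open Filter

/-- Words that are concatenations of blocks satisfying `P`. -/
inductive Star {V : Type*} (P : List V → Prop) : List V → Prop
  | nil : Star P []
  | cons {c w : List V} : P c → Star P w → Star P (c ++ w)

theorem Star.append {V : Type*} {P : List V → Prop} {u c : List V}
    (hu : Star P u) (hc : P c) : Star P (u ++ c) := by
  induction hu with
  | nil => simpa using Star.cons hc Star.nil
  | cons h1 _ ih => rw [List.append_assoc]; exact Star.cons h1 ih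

section Eval

variable {V : Type*} (M : RevPartialDFA V)

/-- evaluation from an optional state -/
def evalo (o : Option M.σ) (w : List V) : Option M.σ :=
  w.foldl (fun os a => os.bind fun s => M.step s a) o

@[simp] theorem evalo_nil (o : Option M.σ) : evalo M o [] = o := rfl

@[simp] theorem evalo_none (w : List V) : evalo M none w = none := by
  induction w with
  | nil => rfl
  | cons a w ih => simpa [evalo] using ih

theorem evalo_append (o : Option M.σ) (w₁ w₂ : List V) :
    evalo M o (w₁ ++ w₂) = evalo M (evalo M o w₁) w₂ :=
  List.foldl_append ..

theorem eval_eq_evalo (w : List V) : M.eval w = evalo M (some M.start) w := rfl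

@[simp] theorem evalo_singleton (q : M.σ) (a : V) :
    evalo M (some q) [a] = M.step q a := by
  simp [evalo]

theorem evalo_cons (o : Option M.σ) (a : V) (w : List V) :
    evalo M o (a :: w) = evalo M (o.bind fun s => M.step s a) w := rfl

end Eval

section Machine

variable {V : Type*} {q n k : ℕ}

/-- State space of the machine: phase-1 states (prefixes of length `< n` read in the
current block), phase-2 states (nonempty remaining suffix of the address). -/
abbrev St (q n k : ℕ) : Type :=
  {l : List (Fin q) // l.length < n} ⊕ {l : List (Fin q) // l ≠ [] ∧ l.length ≤ k}

noncomputable instance : Fintype (St q n k) := by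
  have h1 : Finite {l : List (Fin q) // l.length < n} :=
    (List.finite_length_lt (Fin q) n).to_subtype
  have h2 : Finite {l : List (Fin q) // l ≠ [] ∧ l.length ≤ k} := by
    have : Finite {l : List (Fin q) // l.length ≤ k} :=
      (List.finite_length_le (Fin q) k).to_subtype
    exact Finite.of_injective
      (fun x => (⟨x.1, x.2.2⟩ : {l : List (Fin q) // l.length ≤ k}))
      (fun x y h => by cases x; cases y; simpa using h)
  have : Finite (St q n k) := by unfold St; infer_instance
  exact Fintype.ofFinite _

variable (e : V ≃ Fin q) (S : Set (Fin n → V)) (A : (Fin n → V) → List V)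

/-- encoding of a block as a list over `Fin q` -/
def enc (e : V ≃ Fin q) (s : Fin n → V) : List (Fin q) := List.ofFn (fun i => e (s i))

/-- root state -/
def mroot (hn : 0 < n) : St q n k := Sum.inl ⟨[], by simpa using hn⟩

open Classical in
/-- the transition function -/
noncomputable def mstep (hn : 0 < n) (hk : 0 < k) :
    St q n k → V → Option (St q n k) := fun st a =>
  match st with
  | Sum.inl p =>
      if h : p.1.length + 1 < n then
        some (Sum.inl ⟨p.1 ++ [e a], by simpa using h⟩)
      else if hs : ∃ s, s ∈ S ∧ enc e s = p.1 ++ [e a] ∧ (A s).length = k then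
        some (Sum.inr ⟨(A hs.choose).map e, by
          have hlen : (A hs.choose).length = k := hs.choose_spec.2.2
          constructor
          · intro hcon
            apply_fun List.length at hcon
            simp [hlen] at hcon
            omega
          · simp [hlen]⟩)
      else none
  | Sum.inr v =>
      match v with
      | ⟨[], hv⟩ => absurd rfl hv.1
      | ⟨b :: v', hv⟩ =>
          if b = e a then
            if h2 : v' = [] then some (mroot hn)
            else some (Sum.inr ⟨v', h2, by
              have := hv.2; simp at this; omega⟩)
          else none

theorem enc_inj (e : V ≃ Fin q) : Function.Injective (enc (n := n) e) := by
  intro s t h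
  have := List.ofFn_injective h
  funext i
  exact e.injective (congrFun this i)

theorem mstep_rev (hn : 0 < n) (hk : 0 < k) (hA2 : Set.InjOn A S)
    (a : V) (x y t : St q n k) (hx : mstep e S A hn hk x a = some t)
    (hy : mstep e S A hn hk y a = some t) : x = y := by
  rcases x with ⟨p, hp⟩ | ⟨⟨_ | ⟨b, v⟩⟩, hv⟩
  case inr.nil => exact absurd rfl hv.1
  all_goals rcases y with ⟨p', hp'⟩ | ⟨⟨_ | ⟨b', v'⟩⟩, hv'⟩
  case inl.inr.nil => exact absurd rfl hv'.1
  case inr.cons.inr.nil => exact absurd rfl hv'.1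
  all_goals simp only [mstep, mroot] at hx hy
  all_goals split_ifs at hx hy with h1 h2 h3 h4 h5 h6
  all_goals (try exact Option.noConfusion hx)
  all_goals (try exact Option.noConfusion hy)
  all_goals rw [Option.some.injEq] at hx hy
  all_goals subst hx
  all_goals (try exact absurd hy Sum.inl_ne_inr)
  all_goals (try exact absurd hy Sum.inr_ne_inl)
  -- 8 remaining cases
  · simp only [Sum.inl.injEq, Subtype.mk.injEq] at hy
    have := (List.append_inj' hy rfl).1
    simp [this]
  · simp only [Sum.inr.injEq, Subtype.mk.injEq] at hy
    have hAA : A h6.choose = A h4.choose := List.map_injective_iff.2 e.injective hy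
    have hss := hA2 h6.choose_spec.1 h4.choose_spec.1 hAA
    have he6 := h6.choose_spec.2.1
    rw [hss, h4.choose_spec.2.1] at he6
    have := (List.append_inj' he6 rfl).1
    simp [this]
  · exfalso; simp only [Sum.inl.injEq, Subtype.mk.injEq] at hy
    exact absurd hy.symm (by simp)
  · exfalso; simp only [Sum.inr.injEq, Subtype.mk.injEq] at hy
    have hlen := congrArg List.length hy
    simp [h4.choose_spec.2.2] at hlen
    have h7 := hv'.2
    simp at h7
    omega
  · exfalso; simp only [Sum.inl.injEq, Subtype.mk.injEq] at hy
    exact absurd hy (by simp)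
  · exfalso; simp only [Sum.inr.injEq, Subtype.mk.injEq] at hy
    have hlen := congrArg List.length hy
    simp [h6.choose_spec.2.2] at hlen
    have h7 := hv.2
    simp at h7
    omega
  · subst h1 h2 h3 h4; rfl
  · simp only [Sum.inr.injEq, Subtype.mk.injEq] at hy
    subst h1 h5 hy; rfl

/-- The reversible partial DFA recognizing `(code S A)^*`. -/
@[reducible] noncomputable def mkM (e : V ≃ Fin q) (S : Set (Fin n → V)) (A : (Fin n → V) → List V)
    (hn : 0 < n) (hk : 0 < k) (hA2 : Set.InjOn A S) : RevPartialDFA V where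
  σ := St q n k
  fintype := inferInstance
  step := mstep e S A hn hk
  start := mroot hn
  accept := {mroot hn}
  reversible := fun a x y t hx hy => mstep_rev e S A hn hk hA2 a x y t hx hy

theorem enc_eq_map (e : V ≃ Fin q) (s : Fin n → V) :
    enc e s = (List.ofFn s).map e := by
  simp [enc, List.map_ofFn]; rfl

variable (hn : 0 < n) (hk : 0 < k) (hA2 : Set.InjOn A S)

/-- the block language -/
def Cpred (S : Set (Fin n → V)) (A : (Fin n → V) → List V) : List V → Prop :=
  fun c => ∃ s ∈ S, c = List.ofFn s ++ A s

@[simp] theorem mkM_step :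
    (mkM e S A hn hk hA2).step = mstep e S A hn hk := rfl

@[simp] theorem mkM_start :
    (mkM e S A hn hk hA2).start = mroot hn := rfl

theorem eval_phase1 (w : List V) : ∀ (hw : w.length < n),
    evalo (mkM e S A hn hk hA2) (some (mroot hn)) w
      = some (Sum.inl ⟨w.map e, by simpa using hw⟩) := by
  induction w using List.reverseRecOn with
  | nil => intro hw; rfl
  | append_singleton w a ih =>
    intro hw
    rw [evalo_append]
    have hw' : w.length < n := by simp at hw; omega
    rw [ih hw', evalo_singleton, mkM_step]
    simp only [mstep]
    rw [dif_pos (by simpa using hw)]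
    simp

theorem eval_block (hA1 : ∀ s ∈ S, (A s).length = k) (s : Fin n → V) (hs : s ∈ S) :
    evalo (mkM e S A hn hk hA2) (some (mroot hn)) (List.ofFn s)
      = some (Sum.inr ⟨(A s).map e, by
          simp [← List.length_eq_zero_iff, hA1 s hs]; omega, by simp [hA1 s hs]⟩) := by
  have hne : List.ofFn s ≠ [] := by
    simp [← List.length_eq_zero_iff]; omega
  have hsplit := List.dropLast_append_getLast hne
  set p := (List.ofFn s).dropLast with hp
  set a := (List.ofFn s).getLast hne with ha
  have hplen : p.length = n - 1 := by simp [hp]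
  rw [← hsplit, evalo_append, eval_phase1 e S A hn hk hA2 p (by omega), evalo_singleton,
    mkM_step]
  simp only [mstep]
  have hcond : ¬ ((p.map e).length + 1 < n) := by simp [hplen]; omega
  have hex : ∃ s', s' ∈ S ∧ enc e s' = p.map e ++ [e a] ∧ (A s').length = k := by
    refine ⟨s, hs, ?_, hA1 s hs⟩
    rw [enc_eq_map, ← hsplit]
    simp
  rw [dif_neg hcond, dif_pos hex]
  have hchoose : hex.choose = s := by
    apply enc_inj e
    rw [hex.choose_spec.2.1, enc_eq_map, ← hsplit]
    simp
  simp only [hchoose]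

theorem eval_suffix (v : List V) : ∀ (hv1 : v ≠ []) (hv2 : v.length ≤ k),
    evalo (mkM e S A hn hk hA2)
      (some (Sum.inr ⟨v.map e, by simpa using hv1, by simpa using hv2⟩)) v
      = some (mroot hn) := by
  induction v with
  | nil => intro hv1 _; exact absurd rfl hv1
  | cons b v' ih =>
    intro hv1 hv2
    rw [evalo_cons]
    simp only [Option.bind_some, mkM_step, List.map_cons]
    by_cases hv' : v' = []
    · subst hv'
      simp only [mstep, List.map_nil]
      simp
    · simp only [mstep, if_true]
      rw [dif_neg (by simpa using hv')]
      exact ih hv' (by simp at hv2; omega)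

theorem eval_code (hA1 : ∀ s ∈ S, (A s).length = k) (s : Fin n → V) (hs : s ∈ S) :
    evalo (mkM e S A hn hk hA2) (some (mroot hn)) (List.ofFn s ++ A s)
      = some (mroot hn) := by
  rw [evalo_append, eval_block e S A hn hk hA2 hA1 s hs]
  exact eval_suffix e S A hn hk hA2 (A s)
    (by simp [← List.length_eq_zero_iff, hA1 s hs]; omega) (by simp [hA1 s hs])

theorem star_accepted (hA1 : ∀ s ∈ S, (A s).length = k) (w : List V)
    (hw : Star (Cpred S A) w) :
    evalo (mkM e S A hn hk hA2) (some (mroot hn)) w = some (mroot hn) := by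
  induction hw with
  | nil => rfl
  | cons hc _ ih =>
    rename_i c w'
    obtain ⟨s, hs, rfl⟩ := hc
    rw [evalo_append, eval_code e S A hn hk hA2 hA1 s hs]
    exact ih

theorem run_inv (w : List V) : ∀ (t : St q n k),
    evalo (mkM e S A hn hk hA2) (some (mroot hn)) w = some t →
    (∃ (u p₀ : List V) (hp : (List.map e p₀).length < n),
        Star (Cpred S A) u ∧ w = u ++ p₀ ∧ t = Sum.inl ⟨p₀.map e, hp⟩)
    ∨ (∃ (u r : List V) (s : Fin n → V) (v : List (Fin q)) (hv : v ≠ [] ∧ v.length ≤ k),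
        Star (Cpred S A) u ∧ s ∈ S ∧ w = u ++ r ∧
        r.map e ++ v = (List.ofFn s ++ A s).map e ∧ t = Sum.inr ⟨v, hv⟩) := by
  induction w using List.reverseRecOn with
  | nil =>
    intro t ht
    left
    refine ⟨[], [], by simpa using hn, Star.nil, rfl, ?_⟩
    simp only [evalo_nil, Option.some.injEq] at ht
    rw [← ht]; rfl
  | append_singleton w a ih =>
    intro t ht
    rw [evalo_append] at ht
    cases hw0 : evalo (mkM e S A hn hk hA2) (some (mroot hn)) w with
    | none => rw [hw0, evalo_none] at ht; simp at ht
    | some t₀ =>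
      rw [hw0, evalo_singleton, mkM_step] at ht
      rcases ih t₀ hw0 with ⟨u, p₀, hp, hu, hw, ht₀⟩ | ⟨u, r, s, v, hv, hu, hsS, hw, hcode, ht₀⟩
      · subst ht₀
        simp only [mstep] at ht
        split_ifs at ht with h1 h2
        · left
          rw [Option.some.injEq] at ht
          refine ⟨u, p₀ ++ [a], by simpa using h1, hu, by rw [hw, List.append_assoc], ?_⟩
          rw [← ht]
          simp
        · right
          rw [Option.some.injEq] at ht
          refine ⟨u, p₀ ++ [a], h2.choose, (A h2.choose).map e,
            ⟨by simp [← List.length_eq_zero_iff, h2.choose_spec.2.2]; omega,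
             by simp [h2.choose_spec.2.2]⟩,
            hu, h2.choose_spec.1, by rw [hw, List.append_assoc], ?_, by rw [← ht]⟩
          rw [show (List.ofFn h2.choose ++ A h2.choose).map e
                = (List.ofFn h2.choose).map e ++ (A h2.choose).map e from
              List.map_append ..]
          congr 1
          rw [← enc_eq_map, h2.choose_spec.2.1]
          simp
      · subst ht₀
        rcases v with _ | ⟨b, v'⟩
        · exact absurd rfl hv.1
        simp only [mstep] at ht
        split_ifs at ht with h1 h2
        · -- completed a code word
          left
          rw [Option.some.injEq] at ht
          subst h1 h2
          have hra : (r ++ [a]).map e = (List.ofFn s ++ A s).map e := by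
            simpa using hcode
          have hra' : r ++ [a] = List.ofFn s ++ A s :=
            List.map_injective_iff.2 e.injective hra
          refine ⟨u ++ (r ++ [a]), [], by simpa using hn,
            hu.append ⟨s, hsS, hra'⟩, ?_, ?_⟩
          · rw [hw, List.append_assoc]
            simp
          · rw [← ht]; rfl
        · -- still inside the address
          right
          rw [Option.some.injEq] at ht
          subst h1
          refine ⟨u, r ++ [a], s, v', ⟨h2, by simp at hv ⊢; omega⟩,
            hu, hsS, by rw [hw, List.append_assoc], ?_, by rw [← ht]⟩
          rw [← hcode]
          simp

theorem accepts_eq (hA1 : ∀ s ∈ S, (A s).length = k) :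
    (mkM e S A hn hk hA2).accepts = {w | Star (Cpred S A) w} := by
  ext w
  constructor
  · rintro ⟨st, hst, hev⟩
    have hst' : st = mroot hn := hst
    subst hst'
    have := run_inv e S A hn hk hA2 w (mroot hn) hev
    rcases this with ⟨u, p₀, hp, hu, hw, ht⟩ | ⟨u, r, s, v, hv, hu, hsS, hw, hcode, ht⟩
    · have hval : p₀.map e = [] := by
        have h2 := congrArg (fun x => match x with
          | Sum.inl y => y.1
          | Sum.inr _ => ([] : List (Fin q))) ht
        simpa [mroot] using h2.symm
      have hp0 : p₀ = [] := by simpa using hval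
      subst hp0
      simpa [hw] using hu
    · exact absurd ht (by simp [mroot])
  · intro hw
    exact ⟨mroot hn, rfl, star_accepted e S A hn hk hA2 hA1 w hw⟩

include hn in
theorem star_dist (G : SimpleGraph V) (hS : S.Pairwise fun a b => ¬ (strongPow G n).Adj a b)
    (hA1 : ∀ s ∈ S, (A s).length = k) :
    Distinguishable G {w | Star (Cpred S A) w} := by
  intro x hx
  induction hx with
  | nil =>
    intro y _ hlen hne
    exact absurd (List.length_eq_zero_iff.1 hlen.symm).symm hne
  | cons hc _ ih =>
    rename_i c x₂ hx₂
    intro y hy hlen hne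
    obtain ⟨s, hsS, rfl⟩ := hc
    cases hy with
    | nil =>
      exfalso
      simp at hlen
      omega
    | cons hc' hy₂ =>
      rename_i c' y₂
      obtain ⟨t, htS, rfl⟩ := hc'
      by_cases hst : s = t
      · subst hst
        have hlen₂ : x₂.length = y₂.length := by
          simp at hlen
          omega
        have hne₂ : x₂ ≠ y₂ := fun h => hne (by rw [h])
        obtain ⟨i, hxi, hyi, hne', hnadj⟩ := ih y₂ hy₂ hlen₂ hne₂
        have hL := (List.ofFn s ++ A s).length
        refine ⟨(List.ofFn s ++ A s).length + i, by simp; omega, by simp; omega, ?_⟩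
        have e1 : ∀ (z : List V) (hzi : i < z.length)
            (hz : (List.ofFn s ++ A s).length + i < ((List.ofFn s ++ A s) ++ z).length),
            ((List.ofFn s ++ A s) ++ z).get ⟨(List.ofFn s ++ A s).length + i, hz⟩
              = z.get ⟨i, hzi⟩ := by
          intro z hzi hz
          simp only [List.get_eq_getElem]
          rw [List.getElem_append_right (by omega)]
          simp
        rw [e1 x₂ hxi, e1 y₂ hyi]
        exact ⟨hne', hnadj⟩
      · have hnadj : ¬ (strongPow G n).Adj s t := hS hsS htS hst
        have hex : ∃ i : Fin n, s i ≠ t i ∧ ¬ G.Adj (s i) (t i) := by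
          by_contra hcon
          push_neg at hcon
          refine hnadj ⟨hst, fun i => ?_⟩
          rcases Classical.em (s i = t i) with h | h
          · exact Or.inl h
          · exact Or.inr (hcon i h)
        obtain ⟨i, hne', hnadj'⟩ := hex
        have hxb : i.1 < ((List.ofFn s ++ A s) ++ x₂).length := by
          have := i.2; simp; omega
        have hyb : i.1 < ((List.ofFn t ++ A t) ++ y₂).length := by
          have := i.2; simp; omega
        refine ⟨i.1, hxb, hyb, ?_⟩
        have e2 : ∀ (z : Fin n → V) (rest : List V)
            (hz : i.1 < ((List.ofFn z ++ A z) ++ rest).length),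
            ((List.ofFn z ++ A z) ++ rest).get ⟨i.1, hz⟩ = z i := by
          intro z rest hz
          simp only [List.get_eq_getElem]
          rw [List.getElem_append_left (by have := i.2; simp; omega),
            List.getElem_append_left (by simpa using i.2)]
          simp
        rw [e2 s x₂, e2 t y₂]
        exact ⟨hne', hnadj'⟩

end Machine

section Count

/-- lists of a fixed length over a finite alphabet are equivalent to tuples -/
def lenEquiv (V : Type*) (m : ℕ) : {w : List V // w.length = m} ≃ (Fin m → V) where
  toFun w i := w.1.get ⟨i.1, by rw [w.2]; exact i.2⟩
  invFun f := ⟨List.ofFn f, by simp⟩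
  left_inv w := Subtype.ext (by
    apply List.ext_getElem (by simp [w.2])
    intro j h1 h2
    simp)
  right_inv f := funext fun i => by simp

theorem ncard_length_eq (V : Type*) [Fintype V] (m : ℕ) :
    {w : List V | w.length = m}.ncard = Fintype.card V ^ m := by
  classical
  rw [← Nat.card_coe_set_eq]
  have he : ↑{w : List V | w.length = m} ≃ (Fin m → V) := lenEquiv V m
  rw [Nat.card_congr he, Nat.card_eq_fintype_card, Fintype.card_fun]
  simp

theorem ncard_len_le {V : Type*} [Fintype V] (L : Set (List V)) (m : ℕ) :
    {w ∈ L | w.length = m}.ncard ≤ Fintype.card V ^ m := by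
  have hsub : {w ∈ L | w.length = m} ⊆ {w : List V | w.length = m} := fun w hw => hw.2
  have h1 := Set.ncard_le_ncard hsub (List.finite_length_eq V m)
  rwa [ncard_length_eq] at h1

end Count

section Growth

open Filter

variable {V : Type*} [Fintype V]

theorem growth_term_le (L : Set (List V)) (m : ℕ) :
    ((Set.ncard {w ∈ L | w.length = m} : ℕ) : ℝ) ^ (1 / (m : ℝ))
      ≤ max (1:ℝ) (Fintype.card V) := by
  rcases Nat.eq_zero_or_pos m with h | h
  · subst h
    simp
  · have hm : (0:ℝ) < m := by exact_mod_cast h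
    have hcnt := ncard_len_le L m
    calc ((Set.ncard {w ∈ L | w.length = m} : ℕ) : ℝ) ^ (1 / (m : ℝ))
        ≤ (((Fintype.card V ^ m : ℕ) : ℝ)) ^ (1 / (m : ℝ)) := by
          apply Real.rpow_le_rpow (by positivity) (by exact_mod_cast hcnt) (by positivity)
      _ = (Fintype.card V : ℝ) := by
          push_cast
          rw [← Real.rpow_natCast (Fintype.card V : ℝ) m, ← Real.rpow_mul (by positivity)]
          rw [show (m : ℝ) * (1 / (m : ℝ)) = 1 by field_simp]
          exact Real.rpow_one _
      _ ≤ max (1:ℝ) (Fintype.card V) := le_max_right _ _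

theorem growth_bddAbove (L : Set (List V)) :
    IsBoundedUnder (· ≤ ·) atTop (fun m : ℕ =>
      ((Set.ncard {w ∈ L | w.length = m} : ℕ) : ℝ) ^ (1 / (m : ℝ))) :=
  isBoundedUnder_of ⟨max (1:ℝ) (Fintype.card V), fun m => growth_term_le L m⟩

theorem growthRate_nonneg_terms (L : Set (List V)) (m : ℕ) :
    (0:ℝ) ≤ ((Set.ncard {w ∈ L | w.length = m} : ℕ) : ℝ) ^ (1 / (m : ℝ)) := by
  positivity

theorem growthRate_le_of (L : Set (List V)) (B : ℝ)
    (h : ∀ m : ℕ, 1 ≤ m →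
      ((Set.ncard {w ∈ L | w.length = m} : ℕ) : ℝ) ^ (1 / (m : ℝ)) ≤ B) :
    growthRate L ≤ B := by
  have hb : Filter.IsBoundedUnder (· ≥ ·) Filter.atTop (fun m : ℕ =>
      ((Set.ncard {w ∈ L | w.length = m} : ℕ) : ℝ) ^ (1 / (m : ℝ))) :=
    isBoundedUnder_of ⟨0, fun m => growthRate_nonneg_terms L m⟩
  exact Filter.limsup_le_of_le hb.isCoboundedUnder_le
    (Filter.eventually_atTop.2 ⟨1, h⟩)

theorem growthRate_le_max (L : Set (List V)) :
    growthRate L ≤ max (1:ℝ) (Fintype.card V) :=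
  growthRate_le_of L _ (fun m _ => growth_term_le L m)

theorem growthRate_ge (L : Set (List V)) (α N : ℕ) (hα : 1 ≤ α) (hN : 1 ≤ N)
    (hcnt : ∀ m : ℕ, 1 ≤ m → α ^ m ≤ {w ∈ L | w.length = m * N}.ncard) :
    ((α : ℝ)) ^ (1 / (N : ℝ)) ≤ growthRate L := by
  apply Filter.le_limsup_of_frequently_le _ (growth_bddAbove L)
  rw [Filter.frequently_atTop]
  intro a
  refine ⟨(a + 1) * N, ?_, ?_⟩
  · calc a ≤ a + 1 := by omega
      _ ≤ (a + 1) * N := Nat.le_mul_of_pos_right _ hN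
  · have h1 := hcnt (a + 1) (by omega)
    have hNa : (0:ℝ) < ((a + 1 : ℕ) : ℝ) * (N:ℝ) := by positivity
    have hcast : ((α : ℝ)) ^ (1 / (N : ℝ))
        = (((α ^ (a+1) : ℕ)) : ℝ) ^ (1 / (((a+1) * N : ℕ) : ℝ)) := by
      push_cast
      rw [← Real.rpow_natCast (α : ℝ) (a+1), ← Real.rpow_mul (by positivity)]
      congr 1
      field_simp
      norm_cast
    rw [hcast]
    apply Real.rpow_le_rpow (by positivity) (by exact_mod_cast h1) (by positivity)

end Growth

section CountStar

variable {V : Type*} [Fintype V] {n k : ℕ}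

theorem ncard_star_ge (S : Set (Fin n → V)) (A : (Fin n → V) → List V)
    (hA1 : ∀ s ∈ S, (A s).length = k) (m : ℕ) :
    S.ncard ^ m ≤ {w ∈ {w | Star (Cpred S A) w} | w.length = m * (n + k)}.ncard := by
  classical
  haveI := S.toFinite.fintype
  set J : List ↥S → List V := fun l => (l.map fun s => List.ofFn s.1 ++ A s.1).flatten with hJ
  have hJcons : ∀ (s : ↥S) (l : List ↥S), J (s :: l) = (List.ofFn s.1 ++ A s.1) ++ J l := by
    intro s l; simp [hJ]
  have hlenJ : ∀ l : List ↥S, (J l).length = l.length * (n + k) := by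
    intro l
    induction l with
    | nil => simp [hJ]
    | cons s l ih =>
      rw [hJcons]
      simp only [List.length_append, List.length_cons, ih, List.length_ofFn,
        hA1 s.1 s.2]
      ring
  have hstarJ : ∀ l : List ↥S, Star (Cpred S A) (J l) := by
    intro l
    induction l with
    | nil => exact Star.nil
    | cons s l ih => rw [hJcons]; exact Star.cons ⟨s.1, s.2, rfl⟩ ih
  have hinj : ∀ l₁ l₂ : List ↥S, J l₁ = J l₂ → l₁.length = l₂.length → l₁ = l₂ := by
    intro l₁
    induction l₁ with
    | nil =>
      intro l₂ _ hl
      exact (List.length_eq_zero_iff.1 hl.symm).symm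
    | cons s l ih =>
      intro l₂ h hl
      rcases l₂ with _ | ⟨t, l₂'⟩
      · exact absurd hl (by simp)
      rw [hJcons, hJcons] at h
      obtain ⟨hc, hrest⟩ := List.append_inj h
        (by simp [hA1 s.1 s.2, hA1 t.1 t.2])
      have hst : s = t := Subtype.ext
        (List.ofFn_injective (List.append_inj hc (by simp)).1)
      rw [hst, ih l₂' hrest (by simpa using hl)]
  set D := {l : List ↥S | l.length = m} with hD
  have hsub : J '' D ⊆ {w ∈ {w | Star (Cpred S A) w} | w.length = m * (n + k)} := by
    rintro w ⟨l, hl, rfl⟩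
    exact ⟨hstarJ l, by rw [hlenJ, hl]⟩
  have hio : Set.InjOn J D := fun l₁ h₁ l₂ h₂ h => hinj l₁ l₂ h (h₁.trans h₂.symm)
  have hfin : {w ∈ {w | Star (Cpred S A) w} | w.length = m * (n + k)}.Finite :=
    Set.Finite.subset (List.finite_length_eq V (m * (n + k))) (fun w hw => hw.2)
  calc S.ncard ^ m = Fintype.card ↥S ^ m := by
        rw [← Nat.card_eq_fintype_card, Nat.card_coe_set_eq]
    _ = D.ncard := (ncard_length_eq (↥S) m).symm
    _ = (J '' D).ncard := (Set.ncard_image_of_injOn hio).symm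
    _ ≤ _ := Set.ncard_le_ncard hsub hfin

end CountStar

section Indep

variable {W : Type*} [Fintype W] (H : SimpleGraph W)

theorem indep_bddAbove :
    BddAbove {k | ∃ s : Set W, (s.Pairwise fun a b => ¬ H.Adj a b) ∧ s.ncard = k} := by
  refine ⟨Fintype.card W, ?_⟩
  rintro j ⟨s, _, hk⟩
  rw [← hk]
  have := Set.ncard_le_ncard (Set.subset_univ s) Set.finite_univ
  simpa [Set.ncard_univ, Nat.card_eq_fintype_card] using this

theorem indep_mem_zero :
    0 ∈ {k | ∃ s : Set W, (s.Pairwise fun a b => ¬ H.Adj a b) ∧ s.ncard = k} :=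
  ⟨∅, by simp, by simp⟩

theorem le_indepNum {s : Set W} (h : s.Pairwise fun a b => ¬ H.Adj a b) :
    s.ncard ≤ indepNum H := le_csSup (indep_bddAbove H) ⟨s, h, rfl⟩

theorem exists_indep :
    ∃ s : Set W, (s.Pairwise fun a b => ¬ H.Adj a b) ∧ s.ncard = indepNum H :=
  Nat.sSup_mem ⟨0, indep_mem_zero H⟩ (indep_bddAbove H)

theorem indepNum_le_card : indepNum H ≤ Fintype.card W := by
  apply csSup_le ⟨0, indep_mem_zero H⟩
  rintro j ⟨s, _, hk⟩
  rw [← hk]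
  have := Set.ncard_le_ncard (Set.subset_univ s) Set.finite_univ
  simpa [Set.ncard_univ, Nat.card_eq_fintype_card] using this

theorem one_le_indepNum [Nonempty W] : 1 ≤ indepNum H := by
  have h := le_indepNum H (s := {Classical.arbitrary W})
    (Set.pairwise_singleton _ _)
  simpa using h

end Indep

section DistCount

variable {V : Type*} [Fintype V]

theorem dist_count_le [Nonempty V] (G : SimpleGraph V) (L : Set (List V))
    (hd : Distinguishable G L) (m : ℕ) :
    {w ∈ L | w.length = m}.ncard ≤ indepNum (strongPow G m) := by
  classical
  set D := {w ∈ L | w.length = m} with hDdef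
  set f : List V → (Fin m → V) :=
    fun w i => w.getD i (Classical.arbitrary V) with hf
  have hgd : ∀ (w : List V), w ∈ D → ∀ (i : Fin m) (hi : (i : ℕ) < w.length),
      f w i = w.get ⟨i, hi⟩ := by
    intro w hw i hi
    show w.getD i (Classical.arbitrary V) = _
    rw [List.getD_eq_getElem _ _ hi]
    simp
  have hinj : Set.InjOn f D := by
    intro w₁ h₁ w₂ h₂ hfe
    apply List.ext_getElem (h₁.2.trans h₂.2.symm)
    intro j hj1 hj2
    have hjm : j < m := h₁.2 ▸ hj1
    have := congrFun hfe ⟨j, hjm⟩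
    rw [hgd w₁ h₁ ⟨j, hjm⟩ hj1, hgd w₂ h₂ ⟨j, hjm⟩ hj2] at this
    simpa using this
  have hpair : (f '' D).Pairwise fun a b => ¬ (strongPow G m).Adj a b := by
    rintro x ⟨w₁, h₁, rfl⟩ y ⟨w₂, h₂, rfl⟩ hne ⟨_, hall⟩
    have hw : w₁ ≠ w₂ := fun h => hne (by rw [h])
    obtain ⟨i, hx, hy, hnei, hnadj⟩ := hd w₁ h₁.1 w₂ h₂.1 (h₁.2.trans h₂.2.symm) hw
    have him : i < m := h₁.2 ▸ hx
    rcases hall ⟨i, him⟩ with heq | hadj'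
    · rw [hgd w₁ h₁ ⟨i, him⟩ hx, hgd w₂ h₂ ⟨i, him⟩ hy] at heq
      exact hnei heq
    · rw [hgd w₁ h₁ ⟨i, him⟩ hx, hgd w₂ h₂ ⟨i, him⟩ hy] at hadj'
      exact hnadj hadj'
  calc D.ncard = (f '' D).ncard := (Set.ncard_image_of_injOn hinj).symm
    _ ≤ indepNum (strongPow G m) := le_indepNum _ hpair

theorem indepNum_superadd (G : SimpleGraph V) (m t : ℕ) :
    indepNum (strongPow G m) ^ t ≤ indepNum (strongPow G (t * m)) := by
  classical
  obtain ⟨s, hs, hcard⟩ := exists_indep (strongPow G m)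
  haveI := s.toFinite.fintype
  set E : Fin t × Fin m ≃ Fin (t * m) := finProdFinEquiv with hE
  set Φ : (Fin t → ↥s) → (Fin (t * m) → V) :=
    fun g c => (g (E.symm c).1).1 ((E.symm c).2) with hΦ
  have hΦval : ∀ g j i, Φ g (E (j, i)) = (g j).1 i := by
    intro g j i; simp [hΦ]
  have hΦinj : Function.Injective Φ := by
    intro g g' h
    funext j
    apply Subtype.ext
    funext i
    have := congrFun h (E (j, i))
    rwa [hΦval, hΦval] at this
  have hpair : (Set.range Φ).Pairwise fun a b => ¬ (strongPow G (t * m)).Adj a b := by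
    rintro x ⟨g, rfl⟩ y ⟨g', rfl⟩ hne ⟨_, hall⟩
    have hgg : g ≠ g' := fun h => hne (by rw [h])
    obtain ⟨j, hj⟩ : ∃ j, g j ≠ g' j := by
      by_contra hc; push_neg at hc; exact hgg (funext hc)
    have hnadj := hs (g j).2 (g' j).2 (fun h => hj (Subtype.ext h))
    have hex : ∃ i, (g j).1 i ≠ (g' j).1 i ∧ ¬ G.Adj ((g j).1 i) ((g' j).1 i) := by
      by_contra hc
      push_neg at hc
      refine hnadj ⟨fun h => hj (Subtype.ext h), fun i => ?_⟩
      rcases Classical.em ((g j).1 i = (g' j).1 i) with h | h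
      · exact Or.inl h
      · exact Or.inr (hc i h)
    obtain ⟨i, hne', hnadj'⟩ := hex
    rcases hall (E (j, i)) with heq | hadj'
    · rw [hΦval, hΦval] at heq; exact hne' heq
    · rw [hΦval, hΦval] at hadj'; exact hnadj' hadj'
  have hcardr : (Set.range Φ).ncard = s.ncard ^ t := by
    rw [← Set.image_univ, Set.ncard_image_of_injective _ hΦinj, Set.ncard_univ]
    rw [Nat.card_eq_fintype_card, Fintype.card_fun, Fintype.card_fin]
    congr 1
    rw [← Nat.card_eq_fintype_card, Nat.card_coe_set_eq]
  calc indepNum (strongPow G m) ^ t = s.ncard ^ t := by rw [hcard]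
    _ = (Set.range Φ).ncard := hcardr.symm
    _ ≤ indepNum (strongPow G (t * m)) := le_indepNum _ hpair

end DistCount

theorem rpow_le_base {c q m : ℕ} (hm : 1 ≤ m) (h : c ≤ q ^ m) :
    ((c:ℝ)) ^ (1/(m:ℝ)) ≤ (q:ℝ) := by
  have hm0 : (0:ℝ) < m := by exact_mod_cast hm
  calc ((c:ℝ)) ^ (1/(m:ℝ)) ≤ (((q ^ m : ℕ)):ℝ) ^ (1/(m:ℝ)) :=
        Real.rpow_le_rpow (by positivity) (by exact_mod_cast h) (by positivity)
    _ = (q:ℝ) := by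
        push_cast
        rw [← Real.rpow_natCast (q:ℝ) m, ← Real.rpow_mul (by positivity),
          show (m:ℝ) * (1/(m:ℝ)) = 1 by field_simp, Real.rpow_one]

end RevAux

set_option maxHeartbeats 1000000 in
/-- the Shannon capacity is controlled by the reversible capacity:
`Θ_REV(G) ≤ Θ(G) ≤ Θ_REV(G)^{log|G|/(log|G| − log Θ_REV(G))}`. -/
theorem shannonCapacity_le_rpow_revCapacity {V : Type*} [Fintype V] (G : SimpleGraph V)
    (h1 : 1 < revCapacity G) (h2 : revCapacity G < Fintype.card V) :
    revCapacity G ≤ shannonCapacity G ∧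
    shannonCapacity G ≤
      revCapacity G ^
        (Real.log (Fintype.card V) /
          (Real.log (Fintype.card V) - Real.log (revCapacity G))) := by
  classical
  open RevAux in
  set q := Fintype.card V with hqdef
  set r := revCapacity G with hrdef
  have hq1 : (1:ℝ) < (q:ℝ) := lt_trans h1 h2
  have hqnat : 1 < q := Nat.one_lt_cast.1 hq1
  haveI hVne : Nonempty V := Fintype.card_pos_iff.1 (by omega)
  have hr0 : (0:ℝ) < r := lt_trans one_pos h1
  -- the defining set of the reversible capacity, and its boundedness
  set Rset := {x : ℝ | ∃ M : RevPartialDFA V,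
    Distinguishable G M.accepts ∧ growthRate M.accepts = x} with hRset
  have bddR : BddAbove Rset := by
    refine ⟨max (1:ℝ) (q:ℝ), ?_⟩
    rintro x ⟨M, _, rfl⟩
    exact growthRate_le_max _
  -- bound for the terms of the Shannon capacity family
  have hterm_le : ∀ j : ℕ,
      ((indepNum (strongPow G (j+1)) : ℝ)) ^ (1/((j:ℝ)+1)) ≤ (q:ℝ) := by
    intro j
    have hb : indepNum (strongPow G (j+1)) ≤ q ^ (j+1) := by
      have := indepNum_le_card (strongPow G (j+1))
      rwa [Fintype.card_fun, Fintype.card_fin] at this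
    have := rpow_le_base (c := indepNum (strongPow G (j+1))) (q := q) (m := j+1)
      (by omega) hb
    have hc : ((j+1 : ℕ):ℝ) = (j:ℝ)+1 := by push_cast; ring
    rwa [hc] at this
  have hbdd : BddAbove (Set.range fun j : ℕ =>
      ((indepNum (strongPow G (j+1)) : ℝ)) ^ (1/((j:ℝ)+1))) := by
    refine ⟨(q:ℝ), ?_⟩
    rintro x ⟨j, rfl⟩
    exact hterm_le j
  have hsh_nonneg : 0 ≤ shannonCapacity G :=
    Real.iSup_nonneg (fun j => by positivity)
  -- PART 1 : revCapacity ≤ shannonCapacity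
  have part1 : revCapacity G ≤ shannonCapacity G := by
    apply Real.sSup_le _ hsh_nonneg
    rintro x ⟨M, hdist, rfl⟩
    apply growthRate_le_of _ _
    intro m hm
    obtain ⟨j, rfl⟩ : ∃ j, m = j + 1 := ⟨m - 1, by omega⟩
    have hcnt := dist_count_le G M.accepts hdist (j+1)
    have hstep : ((Set.ncard {w ∈ M.accepts | w.length = j+1} : ℕ) : ℝ) ^ (1/((j+1:ℕ):ℝ))
        ≤ ((indepNum (strongPow G (j+1)) : ℝ)) ^ (1/((j:ℝ)+1)) := by
      have hc : ((j+1 : ℕ):ℝ) = (j:ℝ)+1 := by push_cast; ring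
      rw [hc]
      exact Real.rpow_le_rpow (by positivity) (by exact_mod_cast hcnt) (by positivity)
    exact hstep.trans (le_ciSup hbdd j)
  refine ⟨part1, ?_⟩
  -- PART 2
  set Lq := Real.log (q:ℝ) with hLq
  set ρ := Real.log r with hρdef
  have hρ : 0 < ρ := Real.log_pos h1
  have hρL : ρ < Lq := Real.log_lt_log hr0 h2
  have hLρ : 0 < Lq - ρ := by linarith
  have hL0 : 0 < Lq := by linarith
  set c := ρ * Lq / (Lq - ρ) with hcdef
  have hc0 : 0 ≤ c := div_nonneg (mul_nonneg hρ.le hL0.le) hLρ.le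
  -- key bound at every level N
  have key : ∀ N : ℕ, 1 ≤ N →
      Real.log (indepNum (strongPow G N)) ≤ ((N:ℝ) + 1) * c := by
    intro N hN
    obtain ⟨S, hS, hScard⟩ := exists_indep (strongPow G N)
    have hα1 : 1 ≤ indepNum (strongPow G N) := one_le_indepNum _
    set α := indepNum (strongPow G N) with hαdef
    set k := max 1 (Nat.clog q α) with hkdef
    have hk1 : 1 ≤ k := le_max_left _ _
    have hαq : α ≤ q ^ k :=
      le_trans (Nat.le_pow_clog hqnat α)
        (Nat.pow_le_pow_right (by omega) (le_max_right _ _))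
    haveI := S.toFinite.fintype
    have hcards : Fintype.card ↥S ≤ Fintype.card (Fin k → V) := by
      rw [Fintype.card_fun, Fintype.card_fin]
      rw [← Nat.card_eq_fintype_card, Nat.card_coe_set_eq, hScard]
      exact hαq
    obtain ⟨emb⟩ := Function.Embedding.nonempty_of_card_le hcards
    set A : (Fin N → V) → List V :=
      fun s => if h : s ∈ S then List.ofFn (emb ⟨s, h⟩) else [] with hAdef
    have hA1 : ∀ s ∈ S, (A s).length = k := by
      intro s hs; simp [hAdef, dif_pos hs]
    have hA2 : Set.InjOn A S := by
      intro s hs t ht h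
      rw [hAdef] at h
      simp only [dif_pos hs, dif_pos ht] at h
      have h3 := emb.injective (List.ofFn_injective h)
      simpa using congrArg Subtype.val h3
    set e := Fintype.equivFin V
    set M := mkM e S A (by omega : 0 < N) (by omega : 0 < k) hA2 with hMdef
    have hacc : M.accepts = {w | Star (Cpred S A) w} :=
      accepts_eq e S A _ _ hA2 hA1
    have hdist : Distinguishable G M.accepts := by
      rw [hacc]
      exact star_dist S A (by omega) G hS hA1
    have hgrow : ((α:ℝ)) ^ (1/((N + k : ℕ):ℝ)) ≤ growthRate M.accepts := by
      apply growthRate_ge _ α (N+k) hα1 (by omega)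
      intro m hm
      rw [hacc]
      have := ncard_star_ge S A hA1 m
      rwa [hScard] at this
    have hle_r : ((α:ℝ)) ^ (1/((N + k:ℕ):ℝ)) ≤ r :=
      hgrow.trans (le_csSup bddR ⟨M, hdist, rfl⟩)
    have hα_le : (α:ℝ) ≤ r ^ ((N + k : ℕ):ℝ) := by
      have hNk : (0:ℝ) < ((N+k:ℕ):ℝ) := by positivity
      calc (α:ℝ) = ((α:ℝ) ^ (1/((N+k:ℕ):ℝ))) ^ ((N+k:ℕ):ℝ) := by
            rw [← Real.rpow_mul (by positivity),
              show (1/((N+k:ℕ):ℝ)) * ((N+k:ℕ):ℝ) = 1 by field_simp,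
              Real.rpow_one]
        _ ≤ r ^ ((N+k:ℕ):ℝ) :=
            Real.rpow_le_rpow (by positivity) hle_r (by positivity)
    have hlog : Real.log α ≤ ((N+k:ℕ):ℝ) * ρ := by
      have h4 := Real.log_le_log (by exact_mod_cast hα1 : (0:ℝ) < (α:ℝ)) hα_le
      rwa [Real.log_rpow hr0] at h4
    have hkbound : (k:ℝ) ≤ 1 + Real.log α / Lq := by
      rcases eq_or_lt_of_le hα1 with h | h
      · have hα1' : α = 1 := h.symm
        have hkeq : k = 1 := by
          rw [hkdef, hα1', Nat.clog_one_right]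
          simp
        rw [hkeq, hα1']
        simp [Real.log_one]
      · have hclog1 : 1 ≤ Nat.clog q α := Nat.clog_pos hqnat h
        have hkeq : k = Nat.clog q α := by
          rw [hkdef]; exact max_eq_right hclog1
        have hpow : ((q ^ (k-1) : ℕ) : ℝ) ≤ (α:ℝ) := by
          have h5 := Nat.pow_pred_clog_lt_self hqnat h
          have h6 : q ^ (k - 1) < α := by
            rw [hkeq]
            exact h5
          exact_mod_cast h6.le
        have hlogq : ((k:ℝ) - 1) * Lq ≤ Real.log α := by
          have h7 := Real.log_le_log (by positivity) hpow
          rw [Nat.cast_pow, Real.log_pow] at h7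
          have h8 : ((k - 1 : ℕ):ℝ) = (k:ℝ) - 1 := by
            push_cast [hk1]
            ring
          rwa [h8] at h7
        rw [show (1:ℝ) + Real.log α / Lq = 1 + Real.log α / Lq from rfl]
        have h9 : (k:ℝ) - 1 ≤ Real.log α / Lq := by
          rw [le_div_iff₀ hL0]
          exact hlogq
        linarith
    -- combine
    have hcast : ((N+k:ℕ):ℝ) = (N:ℝ) + (k:ℝ) := by push_cast; ring
    rw [hcast] at hlog
    have h3 : Real.log α ≤ ((N:ℝ) + 1 + Real.log α / Lq) * ρ := by
      have h10 := mul_le_mul_of_nonneg_right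
        (by linarith : (N:ℝ) + (k:ℝ) ≤ (N:ℝ) + 1 + Real.log α / Lq) hρ.le
      linarith
    rw [hcdef, show ((N:ℝ)+1) * (ρ * Lq / (Lq - ρ)) = ((N:ℝ)+1)*ρ*Lq/(Lq-ρ) from by ring,
      le_div_iff₀ hLρ]
    have h4 := mul_le_mul_of_nonneg_right h3 hL0.le
    have h5 : ((N:ℝ)+1+Real.log α / Lq) * ρ * Lq
        = ((N:ℝ)+1)*ρ*Lq + Real.log α * ρ := by
      field_simp
    nlinarith [h4, h5]
  -- per-term bound via superadditivity
  apply ciSup_le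
  intro j
  set m := j + 1 with hmdef
  have hα1 : 1 ≤ indepNum (strongPow G m) := one_le_indepNum _
  set α := indepNum (strongPow G m) with hαdef
  have hα0 : (0:ℝ) < (α:ℝ) := by exact_mod_cast hα1
  have hstep : ∀ t : ℕ, 1 ≤ t →
      (t:ℝ) * Real.log α ≤ ((t:ℝ) * (m:ℝ)) * c + c := by
    intro t ht
    have hsup := indepNum_superadd G m t
    have htm : 1 ≤ t * m := Nat.mul_pos (by omega) (by omega)
    have hkey := key (t*m) htm
    have hlog1 : (t:ℝ) * Real.log α ≤ Real.log (indepNum (strongPow G (t*m))) := by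
      rw [← Real.log_pow]
      exact Real.log_le_log (by positivity) (by exact_mod_cast hsup)
    have hc2 : ((t*m : ℕ):ℝ) = (t:ℝ) * (m:ℝ) := by push_cast; ring
    rw [hc2] at hkey
    nlinarith [hlog1, hkey]
  have hbound : Real.log α ≤ (m:ℝ) * c := by
    have htend : Filter.Tendsto (fun t : ℕ => (m:ℝ) * c + c * (1/(t:ℝ)))
        Filter.atTop (nhds ((m:ℝ)*c)) := by
      have h0 : Filter.Tendsto (fun t : ℕ => c * (1/(t:ℝ))) Filter.atTop (nhds 0) := by
        have := tendsto_one_div_atTop_nhds_zero_nat.const_mul c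
        simpa using this
      simpa using (tendsto_const_nhds (x := (m:ℝ)*c) (f := Filter.atTop)).add h0
    apply ge_of_tendsto htend
    filter_upwards [Filter.eventually_ge_atTop 1] with t ht
    have ht0 : (0:ℝ) < (t:ℝ) := by exact_mod_cast ht
    have h6 := hstep t ht
    rw [show (m:ℝ) * c + c * (1/(t:ℝ)) = (((t:ℝ)*(m:ℝ))*c + c)/(t:ℝ) from by
      field_simp]
    rw [le_div_iff₀ ht0]
    nlinarith [h6]
  -- conclude
  have hmcast : (j:ℝ) + 1 = (m:ℝ) := by rw [hmdef]; push_cast; ring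
  have hm0 : (0:ℝ) < (m:ℝ) := by positivity
  have hlhs : (0:ℝ) < (α:ℝ) ^ (1/((j:ℝ)+1)) := Real.rpow_pos_of_pos hα0 _
  have hrhs : (0:ℝ) < r ^ (Lq/(Lq-ρ)) := Real.rpow_pos_of_pos hr0 _
  rw [← Real.log_le_log_iff hlhs hrhs, Real.log_rpow hα0, Real.log_rpow hr0]
  rw [hmcast]
  rw [show Lq/(Lq-ρ) * ρ = c from by
    rw [hcdef, div_mul_eq_mul_div, mul_comm Lq ρ]]
  rw [show 1/(m:ℝ) * Real.log α = Real.log α / (m:ℝ) from by ring]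
  rw [div_le_iff₀ hm0]
  linarith [hbound]
end

section
/- For every finite simple graph G, the unitary capacity is at most the Shannon capacity: Θ_U(G) ≤ Θ(G). -/
open Filter

/-- A Kondacs–Watrous quantum finite automaton over alphabet `α`. -/
structure KWQFA (α : Type*) where
  /-- dimension of the Hilbert space -/
  d : ℕ
  /-- unitary transition matrix for each symbol -/
  U : α → Matrix (Fin d) (Fin d) ℂ
  unitary : ∀ a, U a ∈ Matrix.unitaryGroup (Fin d) ℂ
  /-- initial state -/
  init : Fin d → ℂ
  init_norm : ∑ i, Complex.normSq (init i) = 1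
  /-- accepting projection -/
  A : Matrix (Fin d) (Fin d) ℂ
  /-- rejecting projection -/
  R : Matrix (Fin d) (Fin d) ℂ
  A_idem : A * A = A
  A_herm : A.IsHermitian
  R_idem : R * R = R
  R_herm : R.IsHermitian
  AR : A * R = 0

namespace KWQFA

variable {α : Type*} (M : KWQFA α)

/-- The nonhalting projection `N = I − A − R`. -/
noncomputable def N : Matrix (Fin M.d) (Fin M.d) ℂ := 1 - M.A - M.R

/-- The accepting component of the state after reading a word:
`A (U_{s_n} N) ⋯ (U_{s_1} N) |init⟩` (first symbol applied first). -/
noncomputable def acceptVec (w : List α) : Fin M.d → ℂ :=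
  M.A.mulVec (w.foldl (fun v a => (M.U a * M.N).mulVec v) M.init)

/-- The set of strings accepted with nonzero probability. -/
def accepts : Set (List α) := {w | M.acceptVec w ≠ 0}

/-- The capacity of the automaton: growth of total acceptance probability, counting
strings weighted by their acceptance probability. -/
noncomputable def capacity [Fintype α] : ℝ :=
  Filter.limsup (fun n : ℕ =>
    (∑ w : Fin n → α, ∑ i, Complex.normSq (M.acceptVec (List.ofFn w) i)) ^ (1 / (n : ℝ)))
    Filter.atTop

end KWQFA

/-- The unitary capacity `Θ_U(G)`: the supremum of the capacities of Kondacs–Watrous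
quantum finite automata whose accepted language is distinguishable for `G`. -/
noncomputable def unitaryCapacity {V : Type*} [Fintype V] (G : SimpleGraph V) : ℝ :=
  sSup {r : ℝ | ∃ M : KWQFA V, Distinguishable G M.accepts ∧ M.capacity = r}

open Matrix Filter

noncomputable def en {d : ℕ} (v : Fin d → ℂ) : ℝ := ∑ i, Complex.normSq (v i)

lemma en_nonneg {d : ℕ} (v : Fin d → ℂ) : 0 ≤ en v :=
  Finset.sum_nonneg fun _ _ => Complex.normSq_nonneg _

lemma en_eq_re {d : ℕ} (v : Fin d → ℂ) : en v = (star v ⬝ᵥ v).re := by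
  simp [en, dotProduct, Complex.normSq_apply, Complex.mul_re]


lemma key_dot {d : ℕ} (P : Matrix (Fin d) (Fin d) ℂ) (v : Fin d → ℂ) :
    star (P *ᵥ v) ⬝ᵥ (P *ᵥ v) = star v ⬝ᵥ ((Pᴴ * P) *ᵥ v) := by
  rw [Matrix.star_mulVec, Matrix.dotProduct_mulVec, Matrix.vecMul_vecMul,
    ← Matrix.dotProduct_mulVec]

lemma en_proj_re {d : ℕ} {P : Matrix (Fin d) (Fin d) ℂ} (hH : Pᴴ = P) (hI : P * P = P)
    (v : Fin d → ℂ) : en (P *ᵥ v) = (star v ⬝ᵥ (P *ᵥ v)).re := by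
  rw [en_eq_re, key_dot, hH, hI]

lemma en_proj_le {d : ℕ} {P : Matrix (Fin d) (Fin d) ℂ} (hH : Pᴴ = P) (hI : P * P = P)
    (v : Fin d → ℂ) : en (P *ᵥ v) ≤ en v := by
  have hQH : (1 - P)ᴴ = 1 - P := by simp [Matrix.conjTranspose_sub, hH]
  have hQI : (1 - P) * (1 - P) = 1 - P := by
    rw [sub_mul, mul_sub, mul_sub, one_mul, mul_one, hI]; abel_nf; rw [one_mul]
  have hsum : en v = en (P *ᵥ v) + en ((1 - P) *ᵥ v) := by
    rw [en_proj_re hH hI, en_proj_re hQH hQI, ← Complex.add_re, ← dotProduct_add,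
      ← Matrix.add_mulVec]
    simp [en_eq_re]
  linarith [en_nonneg ((1 - P) *ᵥ v)]

lemma en_unitary {d : ℕ} {U : Matrix (Fin d) (Fin d) ℂ}
    (hU : U ∈ Matrix.unitaryGroup (Fin d) ℂ) (v : Fin d → ℂ) : en (U *ᵥ v) = en v := by
  have h1 : Uᴴ * U = 1 := by
    have := Unitary.star_mul_self_of_mem hU
    simpa [Matrix.star_eq_conjTranspose] using this
  rw [en_eq_re, key_dot, h1, Matrix.one_mulVec, ← en_eq_re]

namespace KWQFA

variable {α : Type*} (M : KWQFA α)

lemma N_herm : M.Nᴴ = M.N := by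
  simp [KWQFA.N, Matrix.conjTranspose_sub, M.A_herm.eq, M.R_herm.eq]

lemma RA : M.R * M.A = 0 := by
  have := congrArg Matrix.conjTranspose M.AR
  simpa [Matrix.conjTranspose_mul, M.A_herm.eq, M.R_herm.eq] using this

lemma N_idem : M.N * M.N = M.N := by
  have hS : (M.A + M.R) * (M.A + M.R) = M.A + M.R := by
    rw [add_mul, mul_add, mul_add, M.A_idem, M.R_idem, M.AR, M.RA]; abel
  have hN : M.N = 1 - (M.A + M.R) := by rw [KWQFA.N, sub_sub]
  rw [hN, sub_mul, mul_sub, mul_sub, one_mul, mul_one, hS]; abel_nf; rw [one_mul, smul_add]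

lemma en_foldl_le (w : List α) (v : Fin M.d → ℂ) :
    en (w.foldl (fun v a => (M.U a * M.N).mulVec v) v) ≤ en v := by
  induction w generalizing v with
  | nil => simp [en]
  | cons a w ih =>
    refine (ih _).trans ?_
    show en ((M.U a * M.N) *ᵥ v) ≤ en v
    rw [← Matrix.mulVec_mulVec, en_unitary (M.unitary a)]
    exact en_proj_le M.N_herm M.N_idem v

lemma en_acceptVec_le_one (w : List α) : en (M.acceptVec w) ≤ 1 := by
  calc en (M.acceptVec w) ≤ en (w.foldl (fun v a => (M.U a * M.N).mulVec v) M.init) :=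
        en_proj_le M.A_herm.eq M.A_idem _
    _ ≤ en M.init := M.en_foldl_le w M.init
    _ = 1 := M.init_norm

end KWQFA

lemma indep_bddAbove {W : Type*} [Fintype W] (H : SimpleGraph W) :
    BddAbove {k | ∃ s : Set W, (s.Pairwise fun a b => ¬ H.Adj a b) ∧ s.ncard = k} := by
  refine ⟨Fintype.card W, ?_⟩
  rintro k ⟨s, _, rfl⟩
  simpa [Set.ncard_univ, Nat.card_eq_fintype_card] using Set.ncard_le_ncard (Set.subset_univ s) Set.finite_univ

lemma indepNum_le_card {W : Type*} [Fintype W] (H : SimpleGraph W) :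
    indepNum H ≤ Fintype.card W := by
  refine csSup_le ⟨0, ∅, by simp, by simp⟩ ?_
  rintro k ⟨s, _, rfl⟩
  simpa [Set.ncard_univ, Nat.card_eq_fintype_card] using Set.ncard_le_ncard (Set.subset_univ s) Set.finite_univ

lemma capacity_le_shannon {V : Type*} [Fintype V] (G : SimpleGraph V) (M : KWQFA V)
    (hD : Distinguishable G M.accepts) : M.capacity ≤ shannonCapacity G := by
  classical
  have hV0 : (0:ℝ) ≤ (Fintype.card V : ℝ) := Nat.cast_nonneg _
  have hterm : ∀ m : ℕ,
      ((indepNum (strongPow G (m+1)) : ℝ)) ^ (1/((m:ℝ)+1)) ≤ (Fintype.card V : ℝ) := by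
    intro m
    have hm : (0:ℝ) < (m:ℝ)+1 := by positivity
    have h1 : (indepNum (strongPow G (m+1)) : ℝ) ≤ (Fintype.card V : ℝ) ^ ((m:ℝ)+1) := by
      have h2 : (indepNum (strongPow G (m+1)) : ℝ) ≤ (Fintype.card (Fin (m+1) → V) : ℝ) := by
        exact_mod_cast indepNum_le_card (strongPow G (m+1))
      refine h2.trans_eq ?_
      rw [show ((m:ℝ)+1) = ((m+1 : ℕ) : ℝ) by push_cast; ring, Real.rpow_natCast]
      simp [Fintype.card_fun]
    calc ((indepNum (strongPow G (m+1)) : ℝ)) ^ (1/((m:ℝ)+1))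
        ≤ ((Fintype.card V : ℝ) ^ ((m:ℝ)+1)) ^ (1/((m:ℝ)+1)) :=
          Real.rpow_le_rpow (Nat.cast_nonneg _) h1 (by positivity)
      _ = (Fintype.card V : ℝ) := by
          rw [← Real.rpow_mul hV0, mul_one_div_cancel hm.ne', Real.rpow_one]
  have hBdd : BddAbove (Set.range fun m : ℕ =>
      ((indepNum (strongPow G (m+1)) : ℝ)) ^ (1/((m:ℝ)+1))) := by
    refine ⟨(Fintype.card V : ℝ), ?_⟩
    rintro x ⟨m, rfl⟩
    exact hterm m
  have hsum : ∀ n : ℕ,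
      (∑ w : Fin n → V, ∑ i, Complex.normSq (M.acceptVec (List.ofFn w) i))
        ≤ (indepNum (strongPow G n) : ℝ) := by
    intro n
    have hstep : ∀ w : Fin n → V, (∑ i, Complex.normSq (M.acceptVec (List.ofFn w) i))
        ≤ if List.ofFn w ∈ M.accepts then (1:ℝ) else 0 := by
      intro w
      by_cases h : List.ofFn w ∈ M.accepts
      · simpa [h, en] using M.en_acceptVec_le_one (List.ofFn w)
      · have h0 : M.acceptVec (List.ofFn w) = 0 := by
          by_contra h'; exact h h'
        simp [h, h0]
    have h1 : (∑ w : Fin n → V, ∑ i, Complex.normSq (M.acceptVec (List.ofFn w) i))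
        ≤ ((Finset.univ.filter fun w : Fin n → V => List.ofFn w ∈ M.accepts).card : ℝ) := by
      calc (∑ w : Fin n → V, ∑ i, Complex.normSq (M.acceptVec (List.ofFn w) i))
          ≤ ∑ w : Fin n → V, if List.ofFn w ∈ M.accepts then (1:ℝ) else 0 :=
            Finset.sum_le_sum fun w _ => hstep w
        _ = _ := by rw [Finset.sum_boole]
    refine h1.trans ?_
    have hmem : (Finset.univ.filter fun w : Fin n → V => List.ofFn w ∈ M.accepts).card
        ∈ {k | ∃ s : Set (Fin n → V),
            (s.Pairwise fun a b => ¬ (strongPow G n).Adj a b) ∧ s.ncard = k} := by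
      refine ⟨((Finset.univ.filter fun w : Fin n → V => List.ofFn w ∈ M.accepts) : Finset _),
        ?_, Set.ncard_coe_finset _⟩
      intro x hx y hy hxy hadj
      simp only [Finset.coe_filter, Set.mem_setOf_eq] at hx hy
      obtain ⟨i, hxl, hyl, hne, hnadj⟩ := hD (List.ofFn x) hx.2 (List.ofFn y) hy.2 (by simp)
        (fun h => hxy (List.ofFn_injective h))
      have hj : i < n := by simpa using hxl
      have e1 : (List.ofFn x).get ⟨i, hxl⟩ = x ⟨i, hj⟩ := by simp [List.get_ofFn]
      have e2 : (List.ofFn y).get ⟨i, hyl⟩ = y ⟨i, hj⟩ := by simp [List.get_ofFn]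
      rw [e1, e2] at hne hnadj
      rcases hadj.2 ⟨i, hj⟩ with h | h
      · exact hne h
      · exact hnadj h
    have hle := le_csSup (indep_bddAbove (strongPow G n)) hmem
    exact_mod_cast hle
  rw [KWQFA.capacity]
  refine Filter.limsup_le_of_le ?_ ?_
  · exact Filter.isCoboundedUnder_le_of_le atTop (x := 0) fun n => Real.rpow_nonneg
      (Finset.sum_nonneg fun w _ => Finset.sum_nonneg fun i _ => Complex.normSq_nonneg _) _
  · filter_upwards [eventually_ge_atTop 1] with n hn
    obtain ⟨m, rfl⟩ : ∃ m, n = m + 1 := ⟨n - 1, by omega⟩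
    have hcast : (((m+1 : ℕ)) : ℝ) = (m:ℝ)+1 := by push_cast; ring
    have h1 : (∑ w : Fin (m+1) → V, ∑ i, Complex.normSq (M.acceptVec (List.ofFn w) i))
          ^ (1/(((m+1:ℕ)):ℝ))
        ≤ (indepNum (strongPow G (m+1)) : ℝ) ^ (1/(((m+1:ℕ)):ℝ)) :=
      Real.rpow_le_rpow
        (Finset.sum_nonneg fun w _ => Finset.sum_nonneg fun i _ => Complex.normSq_nonneg _)
        (hsum (m+1)) (by positivity)
    rw [hcast] at h1 ⊢
    refine h1.trans ?_
    exact le_ciSup hBdd m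

/-- the unitary capacity is at most the Shannon capacity. -/
theorem unitaryCapacity_le_shannonCapacity {V : Type*} [Fintype V] (G : SimpleGraph V) :
    unitaryCapacity G ≤ shannonCapacity G := by
  
  refine Real.sSup_le ?_ ?_
  · rintro r ⟨M, hD, rfl⟩
    exact capacity_le_shannon G M hD
  · exact Real.iSup_nonneg fun n => Real.rpow_nonneg (Nat.cast_nonneg _) _
end

section
/- The reversible capacity of the 5-cycle equals the square root of 5: Θ_REV(C₅) = √5. -/
open Filter

namespace RevCap

noncomputable def r5 : ℝ := Real.sqrt 5
noncomputable def hh : ℝ := Real.sqrt (4 + 4*r5)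
noncomputable def AA : ℝ := Real.sqrt (10 - 2*r5)
noncomputable def BB : ℝ := Real.sqrt (10 + 2*r5)

lemma r5_sq : r5 * r5 = 5 := Real.mul_self_sqrt (by norm_num)
lemma r5_nonneg : 0 ≤ r5 := Real.sqrt_nonneg 5
lemma r5_ge_two : 2 ≤ r5 := by
  rw [show (2:ℝ) = Real.sqrt 4 by rw [show (4:ℝ) = 2^2 by norm_num, Real.sqrt_sq]; norm_num]
  exact Real.sqrt_le_sqrt (by norm_num)
lemma r5_le_three : r5 ≤ 3 := by
  rw [show (3:ℝ) = Real.sqrt 9 by rw [show (9:ℝ) = 3^2 by norm_num, Real.sqrt_sq]; norm_num]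
  exact Real.sqrt_le_sqrt (by norm_num)
lemma hh_sq : hh * hh = 4 + 4*r5 := Real.mul_self_sqrt (by nlinarith [r5_nonneg])
lemma AA_sq : AA * AA = 10 - 2*r5 := Real.mul_self_sqrt (by nlinarith [r5_le_three])
lemma BB_sq : BB * BB = 10 + 2*r5 := Real.mul_self_sqrt (by nlinarith [r5_nonneg])
lemma AB : AA * BB = 4 * r5 := by
  rw [AA, BB, ← Real.sqrt_mul (by nlinarith [r5_le_three])]
  rw [show (10 - 2*r5) * (10 + 2*r5) = 100 - 4*(r5*r5) by ring, r5_sq]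
  rw [show (100 - 4*5 : ℝ) = 4^2 * 5 by norm_num, Real.sqrt_mul (by norm_num),
    show ((4:ℝ)^2) = 4^2 by norm_num, Real.sqrt_sq (by norm_num)]
  rfl

def dot {β : Type*} [Fintype β] (f g : β → ℝ) : ℝ := ∑ b, f b * g b

lemma bessel {ι β : Type*} [Fintype β] (s : Finset ι) (v : ι → β → ℝ) (T : β → ℝ)
    (N : ℝ) (hN : 0 < N)
    (hnorm : ∀ i ∈ s, dot (v i) (v i) = N)
    (horth : ∀ i ∈ s, ∀ j ∈ s, i ≠ j → dot (v i) (v j) = 0) :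
    ∑ i ∈ s, (dot T (v i))^2 ≤ N * dot T T := by
  classical
  set c : ι → ℝ := fun i => dot T (v i) with hc
  have key : (0:ℝ) ≤ ∑ b, (N * T b - ∑ i ∈ s, c i * v i b)^2 :=
    Finset.sum_nonneg fun b _ => sq_nonneg _
  have expand : ∑ b, (N * T b - ∑ i ∈ s, c i * v i b)^2
      = N^2 * dot T T - 2*N*(∑ i ∈ s, (c i)^2) + N * ∑ i ∈ s, (c i)^2 := by
    have h1 : ∑ b, T b * (∑ i ∈ s, c i * v i b) = ∑ i ∈ s, (c i)^2 := by
      simp_rw [Finset.mul_sum]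
      rw [Finset.sum_comm]
      refine Finset.sum_congr rfl fun i _ => ?_
      have : ∑ b, T b * (c i * v i b) = c i * dot T (v i) := by
        rw [dot, Finset.mul_sum]; exact Finset.sum_congr rfl fun b _ => by ring
      rw [this]; rw [show dot T (v i) = c i from rfl]; ring
    have h2 : ∑ b, (∑ i ∈ s, c i * v i b)^2 = N * ∑ i ∈ s, (c i)^2 := by
      have : ∀ b, (∑ i ∈ s, c i * v i b)^2
          = ∑ i ∈ s, ∑ j ∈ s, (c i * c j) * (v i b * v j b) := by
        intro b
        rw [sq, Finset.sum_mul_sum]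
        exact Finset.sum_congr rfl fun i _ => Finset.sum_congr rfl fun j _ => by ring
      simp_rw [this]
      rw [Finset.sum_comm]
      have : ∀ i ∈ s, ∑ b, ∑ j ∈ s, (c i * c j) * (v i b * v j b) = N * (c i)^2 := by
        intro i hi
        rw [Finset.sum_comm]
        have : ∀ j ∈ s, ∑ b, (c i * c j) * (v i b * v j b) = (c i * c j) * dot (v i) (v j) := by
          intro j _
          rw [dot, Finset.mul_sum]
        rw [Finset.sum_congr rfl this]
        rw [Finset.sum_eq_single i]
        · rw [hnorm i hi]; ring
        · intro j hj hji; rw [horth i hi j hj (Ne.symm hji)]; ring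
        · intro h; exact absurd hi h
      rw [Finset.sum_congr rfl this, ← Finset.mul_sum]
    have h0 : ∑ b, (N * T b)^2 = N^2 * dot T T := by
      rw [dot, Finset.mul_sum]
      exact Finset.sum_congr rfl fun b _ => by ring
    calc ∑ b, (N * T b - ∑ i ∈ s, c i * v i b)^2
        = ∑ b, ((N * T b)^2 - 2*N*(T b * (∑ i ∈ s, c i * v i b))
            + (∑ i ∈ s, c i * v i b)^2) := Finset.sum_congr rfl fun b _ => by ring
      _ = (∑ b, (N * T b)^2) - 2*N*(∑ b, T b * (∑ i ∈ s, c i * v i b))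
            + ∑ b, (∑ i ∈ s, c i * v i b)^2 := by
          rw [Finset.sum_add_distrib, Finset.sum_sub_distrib, Finset.mul_sum]
      _ = N^2 * dot T T - 2*N*(∑ i ∈ s, (c i)^2) + N * ∑ i ∈ s, (c i)^2 := by
          rw [h0, h1, h2]
  rw [expand] at key
  nlinarith [key, hN]


lemma r5_sq' : r5^2 = 5 := by rw [sq]; exact r5_sq
lemma hh_sq' : hh^2 = 4 + 4*r5 := by rw [sq]; exact hh_sq
lemma AA_sq' : AA^2 = 10 - 2*r5 := by rw [sq]; exact AA_sq
lemma BB_sq' : BB^2 = 10 + 2*r5 := by rw [sq]; exact BB_sq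
lemma AB' : BB * AA = 4 * r5 := by rw [mul_comm]; exact AB

noncomputable def u : Fin 5 → Fin 3 → ℝ :=
  ![![4, 0, hh], ![r5-1, BB, hh], ![-(1+r5), AA, hh], ![-(1+r5), -AA, hh], ![r5-1, -BB, hh]]

noncomputable def tv : Fin 3 → ℝ := ![0, 0, 1]

lemma dot3 (f g : Fin 3 → ℝ) : dot f g = f 0 * g 0 + f 1 * g 1 + f 2 * g 2 := by
  simp [dot, Fin.sum_univ_three]

lemma u_norm (k : Fin 5) : dot (u k) (u k) = 20 + 4*r5 := by
  fin_cases k <;> rw [dot3] <;>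
    simp [u, Matrix.vecHead, Matrix.vecTail] <;>
    linarith [r5_sq', hh_sq', AA_sq', BB_sq', AB, AB']
lemma tv_norm : dot tv tv = 1 := by rw [dot3]; simp [tv]
lemma u_dot_tv (k : Fin 5) : dot tv (u k) = hh := by
  fin_cases k <;> rw [dot3] <;> simp [u, tv, Matrix.vecHead, Matrix.vecTail]
lemma u_orth (a b : Fin 5) (hne : a ≠ b) (hadj : ¬ (SimpleGraph.cycleGraph 5).Adj a b) :
    dot (u a) (u b) = 0 := by
  fin_cases a <;> fin_cases b <;>
    first
    | exact absurd rfl hne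
    | exact absurd (by decide) hadj
    | (rw [dot3]; simp [u, Matrix.vecHead, Matrix.vecTail];
       linarith [r5_sq', hh_sq', AA_sq', BB_sq', AB, AB'])

noncomputable def V {n : ℕ} (x : Fin n → Fin 5) : (Fin n → Fin 3) → ℝ :=
  fun f => ∏ i, u (x i) (f i)

noncomputable def Tn (n : ℕ) : (Fin n → Fin 3) → ℝ :=
  fun f => ∏ i, tv (f i)

lemma dot_prod {n : ℕ} (g k : Fin n → Fin 3 → ℝ) :
    dot (fun f : Fin n → Fin 3 => ∏ i, g i (f i)) (fun f => ∏ i, k i (f i))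
      = ∏ i, dot (g i) (k i) := by
  classical
  have h := Finset.prod_univ_sum (fun _ : Fin n => (Finset.univ : Finset (Fin 3)))
    (fun i c => g i c * k i c)
  rw [Fintype.piFinset_univ] at h
  calc dot (fun f : Fin n → Fin 3 => ∏ i, g i (f i)) (fun f => ∏ i, k i (f i))
      = ∑ f : Fin n → Fin 3, ∏ i, (g i (f i) * k i (f i)) :=
        Finset.sum_congr rfl fun f _ => (Finset.prod_mul_distrib).symm
    _ = ∏ i, ∑ c, g i c * k i c := h.symm
    _ = ∏ i, dot (g i) (k i) := rfl

lemma dot_V {n : ℕ} (x y : Fin n → Fin 5) :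
    dot (V x) (V y) = ∏ i, dot (u (x i)) (u (y i)) := dot_prod _ _

lemma dot_Tn_V {n : ℕ} (x : Fin n → Fin 5) :
    dot (Tn n) (V x) = hh ^ n := by
  have h : dot (Tn n) (V x) = ∏ i, dot tv (u (x i)) := dot_prod (fun _ => tv) (fun i => u (x i))
  rw [h]; simp [u_dot_tv]

lemma dot_Tn_Tn (n : ℕ) : dot (Tn n) (Tn n) = 1 := by
  have h : dot (Tn n) (Tn n) = ∏ _i : Fin n, dot tv tv := dot_prod (fun _ => tv) (fun _ => tv)
  rw [h]; simp [tv_norm]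

lemma card_le {n : ℕ} (s : Finset (Fin n → Fin 5))
    (hd : ∀ x ∈ s, ∀ y ∈ s, x ≠ y →
      ∃ i, x i ≠ y i ∧ ¬ (SimpleGraph.cycleGraph 5).Adj (x i) (y i)) :
    (s.card : ℝ) ≤ r5 ^ n := by
  have hr5pos : (0:ℝ) < r5 := by nlinarith [r5_sq', r5_nonneg]
  have hb : (0:ℝ) < 4 + 4*r5 := by linarith
  have key := bessel s V (Tn n) ((20 + 4*r5)^n) (by positivity)
    (fun x _ => by rw [dot_V]; simp [u_norm])
    (fun x hx y hy hxy => by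
      obtain ⟨i, hne, hadj⟩ := hd x hx y hy hxy
      rw [dot_V]
      exact Finset.prod_eq_zero (Finset.mem_univ i) (u_orth _ _ hne hadj))
  rw [dot_Tn_Tn, mul_one] at key
  have hsum : ∑ x ∈ s, (dot (Tn n) (V x))^2 = s.card * (4 + 4*r5)^n := by
    rw [Finset.sum_congr rfl (fun x _ => by rw [dot_Tn_V])]
    rw [Finset.sum_const, nsmul_eq_mul]
    congr 1
    rw [← pow_mul, mul_comm n 2, pow_mul, hh_sq']
  rw [hsum] at key
  have h20 : (20 + 4*r5 : ℝ) = r5 * (4 + 4*r5) := by linarith [r5_sq']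
  rw [h20, mul_pow] at key
  have := (mul_le_mul_iff_of_pos_right (pow_pos hb n)).mp key
  exact this


lemma ncard_le {L : Set (List (Fin 5))} (hL : Distinguishable (SimpleGraph.cycleGraph 5) L)
    (n : ℕ) : ((Set.ncard {w ∈ L | w.length = n} : ℕ) : ℝ) ≤ r5 ^ n := by
  classical
  set S : Set (List (Fin 5)) := {w ∈ L | w.length = n} with hS
  set e : List (Fin 5) → (Fin n → Fin 5) := fun w i => w.getD i 0 with he
  have hinj : Set.InjOn e S := by
    intro w hw w' hw' hee
    apply List.ext_getElem (by rw [hw.2, hw'.2])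
    intro i hi hi'
    have h1 : w.getD i 0 = w[i] := List.getD_eq_getElem w 0 hi
    have h2 : w'.getD i 0 = w'[i] := List.getD_eq_getElem w' 0 hi'
    have h3 : w.getD i 0 = w'.getD i 0 := congrFun hee ⟨i, by rw [← hw.2]; exact hi⟩
    rw [h1, h2] at h3
    exact h3
  have himg : S.ncard = (e '' S).ncard := (Set.ncard_image_of_injOn hinj).symm
  have hfin : (e '' S).Finite := Set.toFinite _
  rw [himg, Set.ncard_eq_toFinset_card _ hfin]
  apply card_le
  intro x hx y hy hxy
  rw [Set.Finite.mem_toFinset] at hx hy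
  obtain ⟨w, hw, rfl⟩ := hx
  obtain ⟨w', hw', rfl⟩ := hy
  have hlen : w.length = w'.length := by rw [hw.2, hw'.2]
  have hne : w ≠ w' := fun h => hxy (by rw [h])
  obtain ⟨i, hxi, hyi, hne', hadj⟩ := hL w hw.1 w' hw'.1 hlen hne
  have hin : i < n := by rw [← hw.2]; exact hxi
  have hgw : e w ⟨i, hin⟩ = w.get ⟨i, hxi⟩ := by
    show w.getD i 0 = _
    rw [List.getD_eq_getElem w 0 hxi, List.get_eq_getElem]
  have hgw' : e w' ⟨i, hin⟩ = w'.get ⟨i, hyi⟩ := by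
    show w'.getD i 0 = _
    rw [List.getD_eq_getElem w' 0 hyi, List.get_eq_getElem]
  exact ⟨⟨i, hin⟩, by rw [hgw, hgw']; exact hne', by rw [hgw, hgw']; exact hadj⟩

lemma eventually_le {L : Set (List (Fin 5))}
    (hL : Distinguishable (SimpleGraph.cycleGraph 5) L) :
    ∀ᶠ n : ℕ in atTop,
      ((Set.ncard {w ∈ L | w.length = n} : ℕ) : ℝ) ^ (1 / (n : ℝ)) ≤ r5 := by
  rw [eventually_atTop]
  refine ⟨1, fun n hn => ?_⟩
  have hn0 : (n:ℝ) ≠ 0 := Nat.cast_ne_zero.2 (by omega)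
  have h1 : ((Set.ncard {w ∈ L | w.length = n} : ℕ) : ℝ) ^ (1 / (n : ℝ))
      ≤ (r5 ^ n) ^ (1 / (n : ℝ)) :=
    Real.rpow_le_rpow (Nat.cast_nonneg _) (ncard_le hL n) (by positivity)
  refine h1.trans_eq ?_
  rw [← Real.rpow_natCast r5 n, ← Real.rpow_mul r5_nonneg, mul_one_div_cancel hn0,
    Real.rpow_one]

lemma growth_le {L : Set (List (Fin 5))}
    (hL : Distinguishable (SimpleGraph.cycleGraph 5) L) : growthRate L ≤ r5 := by
  apply Filter.limsup_le_of_le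
  · exact Filter.isCoboundedUnder_le_of_le atTop (fun n => by positivity)
  · exact eventually_le hL


def mstep : Option (Fin 5) → Fin 5 → Option (Option (Fin 5))
  | none, a => some (some a)
  | some b, a => if a = 2*b then some none else none

def M5 : RevPartialDFA (Fin 5) where
  σ := Option (Fin 5)
  fintype := inferInstance
  step := mstep
  start := none
  accept := {none}
  reversible := by decide

def enc (l : List (Fin 5)) : List (Fin 5) := l.flatMap fun b => [b, 2*b]

lemma enc_nil : enc [] = [] := rfl
lemma enc_cons (b : Fin 5) (l : List (Fin 5)) : enc (b :: l) = b :: 2*b :: enc l := rfl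
lemma enc_append (l l' : List (Fin 5)) : enc (l ++ l') = enc l ++ enc l' := by
  simp [enc]
lemma enc_length (l : List (Fin 5)) : (enc l).length = 2 * l.length := by
  induction l with
  | nil => rfl
  | cons b t ih => rw [enc_cons]; simp [ih]; omega

lemma enc_getElem_even (l : List (Fin 5)) (j : ℕ) (hj : j < l.length)
    (hj2 : 2*j < (enc l).length) : (enc l)[2*j] = l[j] := by
  induction l generalizing j with
  | nil => simp at hj
  | cons b t ih =>
    have hc : enc (b :: t) = b :: 2*b :: enc t := rfl
    match j with
    | 0 => rfl
    | j+1 =>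
      have h1 : 2*(j+1) = (2*j) + 1 + 1 := by omega
      simp only [hc, h1, List.getElem_cons_succ]
      exact ih j (by simpa using hj) (by rw [enc_length]; simp at hj ⊢; omega)

lemma enc_getElem_odd (l : List (Fin 5)) (j : ℕ) (hj : j < l.length)
    (hj2 : 2*j+1 < (enc l).length) : (enc l)[2*j+1] = 2 * l[j] := by
  induction l generalizing j with
  | nil => simp at hj
  | cons b t ih =>
    have hc : enc (b :: t) = b :: 2*b :: enc t := rfl
    match j with
    | 0 => rfl
    | j+1 =>
      have h1 : 2*(j+1)+1 = (2*j+1) + 1 + 1 := by omega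
      simp only [hc, h1, List.getElem_cons_succ]
      exact ih j (by simpa using hj) (by rw [enc_length]; simp at hj ⊢; omega)

lemma eval_append (w : List (Fin 5)) (a : Fin 5) :
    M5.eval (w ++ [a]) = (M5.eval w).bind (fun s => M5.step s a) := by
  simp [RevPartialDFA.eval, List.foldl_append]

lemma eval_enc (l : List (Fin 5)) : M5.eval (enc l) = some none := by
  induction l using List.reverseRecOn with
  | nil => rfl
  | append_singleton t b ih =>
    rw [enc_append, show enc [b] = [b] ++ [2*b] from rfl, ← List.append_assoc,
      eval_append, eval_append, ih]
    show (mstep (some b) (2*b)) = some none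
    simp [mstep]

lemma eval_shape (w : List (Fin 5)) :
    (M5.eval w = some none → ∃ l, w = enc l) ∧
    (∀ b : Fin 5, M5.eval w = some (some b) → ∃ l, w = enc l ++ [b]) := by
  induction w using List.reverseRecOn with
  | nil =>
    constructor
    · intro _; exact ⟨[], rfl⟩
    · intro b h; simp [RevPartialDFA.eval, M5] at h
  | append_singleton t a ih =>
    rw [eval_append]
    constructor
    · intro h
      match he : M5.eval t with
      | none => rw [he] at h; simp at h
      | some none =>
        rw [he] at h
        have : mstep none a = some none := h
        simp [mstep] at this
      | some (some c) =>
        rw [he] at h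
        have hstep : mstep (some c) a = some none := h
        have ha : a = 2*c := by
          by_contra hne
          simp [mstep, hne] at hstep
        obtain ⟨l, hl⟩ := ih.2 c he
        exact ⟨l ++ [c], by rw [hl, enc_append, ha]; simp [enc]⟩
    · intro b h
      match he : M5.eval t with
      | none => rw [he] at h; simp at h
      | some none =>
        rw [he] at h
        have hstep : mstep none a = some (some b) := h
        have hab : a = b := by have := hstep.symm; simp [mstep] at this; exact this.symm
        obtain ⟨l, hl⟩ := ih.1 he
        exact ⟨l, by rw [hl, hab]⟩
      | some (some c) =>
        rw [he] at h
        have hstep : mstep (some c) a = some (some b) := h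
        by_cases ha : a = 2*c <;> simp [mstep, ha] at hstep

lemma mem_accepts_iff (w : List (Fin 5)) : w ∈ M5.accepts ↔ ∃ l, w = enc l := by
  constructor
  · rintro ⟨s, hs, he⟩
    have : s = none := hs
    subst this
    exact (eval_shape w).1 he
  · rintro ⟨l, rfl⟩
    exact ⟨none, rfl, eval_enc l⟩


lemma pent : ∀ a b : Fin 5, a ≠ b →
    (¬ (SimpleGraph.cycleGraph 5).Adj a b) ∨
    (2*a ≠ 2*b ∧ ¬ (SimpleGraph.cycleGraph 5).Adj (2*a) (2*b)) := by decide

lemma M5_dist : Distinguishable (SimpleGraph.cycleGraph 5) M5.accepts := by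
  intro x hx y hy hlen hne
  obtain ⟨lx, rfl⟩ := (mem_accepts_iff x).1 hx
  obtain ⟨ly, rfl⟩ := (mem_accepts_iff y).1 hy
  have hlen' : lx.length = ly.length := by
    rw [enc_length, enc_length] at hlen; omega
  have hlne : lx ≠ ly := fun h => hne (by rw [h])
  have hj : ∃ j, ∃ h1 : j < lx.length, ∃ h2 : j < ly.length, lx[j] ≠ ly[j] := by
    by_contra hcon
    push_neg at hcon
    exact hlne (List.ext_getElem hlen' fun j h1 h2 => hcon j h1 h2)
  obtain ⟨j, h1, h2, hne'⟩ := hj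
  have hb1 : 2*j < (enc lx).length := by rw [enc_length]; omega
  have hb2 : 2*j < (enc ly).length := by rw [enc_length]; omega
  have hb1' : 2*j+1 < (enc lx).length := by rw [enc_length]; omega
  have hb2' : 2*j+1 < (enc ly).length := by rw [enc_length]; omega
  rcases pent lx[j] ly[j] hne' with hc | ⟨hc1, hc2⟩
  · refine ⟨2*j, hb1, hb2, ?_, ?_⟩
    · rw [List.get_eq_getElem, List.get_eq_getElem,
        enc_getElem_even lx j h1 hb1, enc_getElem_even ly j h2 hb2]
      exact hne'
    · rw [List.get_eq_getElem, List.get_eq_getElem,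
        enc_getElem_even lx j h1 hb1, enc_getElem_even ly j h2 hb2]
      exact hc
  · refine ⟨2*j+1, hb1', hb2', ?_, ?_⟩
    · rw [List.get_eq_getElem, List.get_eq_getElem,
        enc_getElem_odd lx j h1 hb1', enc_getElem_odd ly j h2 hb2']
      exact hc1
    · rw [List.get_eq_getElem, List.get_eq_getElem,
        enc_getElem_odd lx j h1 hb1', enc_getElem_odd ly j h2 hb2']
      exact hc2

lemma enc_inj : Function.Injective enc := by
  intro l1 l2 h
  have hlen : l1.length = l2.length := by
    have := congrArg List.length h
    rw [enc_length, enc_length] at this; omega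
  apply List.ext_getElem hlen
  intro j hj1 hj2
  have hb1 : 2*j < (enc l1).length := by rw [enc_length]; omega
  have hb2 : 2*j < (enc l2).length := by rw [enc_length]; omega
  calc l1[j] = (enc l1)[2*j] := (enc_getElem_even l1 j hj1 hb1).symm
    _ = (enc l2)[2*j] := List.getElem_of_eq h hb1
    _ = l2[j] := enc_getElem_even l2 j hj2 hb2

lemma ncard_ge (k : ℕ) : 5^k ≤ Set.ncard {w ∈ M5.accepts | w.length = 2*k} := by
  classical
  set g : (Fin k → Fin 5) → List (Fin 5) := fun f => enc (List.ofFn f) with hg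
  have hginj : Function.Injective g := fun f f' h =>
    List.ofFn_injective (enc_inj h)
  have hsub : g '' Set.univ ⊆ {w ∈ M5.accepts | w.length = 2*k} := by
    rintro w ⟨f, _, rfl⟩
    refine ⟨(mem_accepts_iff _).2 ⟨List.ofFn f, rfl⟩, ?_⟩
    rw [hg]; simp [enc_length]
  have hfin : {w ∈ M5.accepts | w.length = 2*k}.Finite :=
    (List.finite_length_eq (α := Fin 5) (n := 2*k)).subset (fun w hw => hw.2)
  have h1 : (g '' Set.univ).ncard = 5^k := by
    rw [Set.ncard_image_of_injective _ hginj, Set.ncard_univ, Nat.card_eq_fintype_card]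
    simp [Fintype.card_fun]
  rw [← h1]
  exact Set.ncard_le_ncard hsub hfin

lemma growth_M5 : growthRate M5.accepts = r5 := by
  refine le_antisymm (growth_le M5_dist) ?_
  apply Filter.le_limsup_of_frequently_le
  · rw [Filter.frequently_atTop]
    intro N
    refine ⟨2*(N+1), by omega, ?_⟩
    set k := N + 1
    have hk : (k:ℝ) ≠ 0 := by positivity
    have hcard : ((5:ℝ)^k) ≤ ((Set.ncard {w ∈ M5.accepts | w.length = 2*k} : ℕ) : ℝ) := by
      exact_mod_cast Nat.cast_le.2 (ncard_ge k)
    have h2k : ((2*k : ℕ) : ℝ) = 2*(k:ℝ) := by push_cast; ring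
    have step1 : ((5:ℝ)^k) ^ (1 / ((2*k : ℕ) : ℝ))
        ≤ ((Set.ncard {w ∈ M5.accepts | w.length = 2*k} : ℕ) : ℝ) ^ (1 / ((2*k : ℕ) : ℝ)) :=
      Real.rpow_le_rpow (by positivity) hcard (by positivity)
    refine le_trans (le_of_eq ?_) step1
    rw [← Real.rpow_natCast (5:ℝ) k, ← Real.rpow_mul (by norm_num), h2k]
    rw [show (k:ℝ) * (1 / (2*(k:ℝ))) = 1/2 by field_simp]
    rw [r5, Real.sqrt_eq_rpow]
  · exact ⟨r5, Filter.eventually_map.2 (eventually_le M5_dist)⟩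


end RevCap

/-- the reversible capacity of the 5-cycle is `√5`. -/
theorem revCapacity_cycleGraph_five :
    revCapacity (SimpleGraph.cycleGraph 5) = Real.sqrt 5 := by
  have hub : ∀ r ∈ {r : ℝ | ∃ M : RevPartialDFA (Fin 5),
      Distinguishable (SimpleGraph.cycleGraph 5) M.accepts ∧ growthRate M.accepts = r},
      r ≤ Real.sqrt 5 := by
    rintro r ⟨M, hd, rfl⟩
    exact RevCap.growth_le hd
  have hmem : Real.sqrt 5 ∈ {r : ℝ | ∃ M : RevPartialDFA (Fin 5),
      Distinguishable (SimpleGraph.cycleGraph 5) M.accepts ∧ growthRate M.accepts = r} :=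
    ⟨RevCap.M5, RevCap.M5_dist, RevCap.growth_M5⟩
  rw [revCapacity]
  exact le_antisymm (Real.sSup_le hub (Real.sqrt_nonneg 5))
    (le_csSup ⟨Real.sqrt 5, hub⟩ hmem)
end
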